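/- Let n ≥ 3, 0 < α < 2, β = (4-2α)/n, and γ = α/2. Let (r,k) satisfy 1/r = (n-2)/(2n) + α/(2n) and 1/r − α/(4(n-1)) < 1/k < 1/r, and define k̃ by 1/k̃' = β/2 + 1/k (where k̃' = k̃/(k̃-1)); then 1/r' = β/2 + 1/r and 1/r < 1/k̃, so (1/r, 1/k̃) lies strictly inside the admissible quadrangle. For all measurable functions u, v on ℝⁿ × [0,∞) one has ‖ |x|^{-α} |u|^{β} v ‖_{L_t^2([0,∞); L_ρ^{r'} L_ω^{k̃'}(|x|^{r'γ}))} ≤ ‖u‖_{L_t^∞([0,∞); L²(ℝⁿ))}^{β} ‖v‖_{L_t^2([0,∞); L_ρ^{r} L_ω^{k}(|x|^{-rγ}))}, where r' = r/(r-1). -/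

import Mathlib

open MeasureTheory Real Set Metric Filter
open scoped ENNReal NNReal

noncomputable section

/-- Euclidean space `ℝⁿ`. -/
abbrev Euc (n : ℕ) := EuclideanSpace ℝ (Fin n)

/-- The surface measure on the unit sphere `S^{n-1} ⊆ ℝⁿ`. -/
noncomputable def sphereMeasure (n : ℕ) : Measure (Metric.sphere (0 : Euc n) 1) :=
  (volume : Measure (Euc n)).toSphere

/-- The Schrödinger propagator `e^{itΔ}` acting on functions, given by the explicit
oscillatory-integral kernel for `t ≠ 0`, and the identity for `t = 0`. -/
noncomputable def schrod (n : ℕ) (t : ℝ) (f : Euc n → ℂ) (x : Euc n) : ℂ :=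
  if t = 0 then f x
  else (4 * Real.pi * Complex.I * t) ^ (-(n : ℂ) / 2) *
      ∫ y : Euc n, Complex.exp (Complex.I * ((‖x - y‖ ^ 2 : ℝ) : ℂ) / (4 * (t : ℂ))) * f y

/-- The weighted mixed norm `‖u‖_{L_ρ^r L_ω^k(|x|^{-rγ})}
  = (∫_0^∞ (∫_{S^{n-1}} |ρ^{-γ} u(ρω)|^k dσ(ω))^{r/k} ρ^{n-1} dρ)^{1/r}`. -/
noncomputable def mixedNorm (n : ℕ) (γ r k : ℝ) (u : Euc n → ℂ) : ℝ≥0∞ :=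
  (∫⁻ ρ in Set.Ioi (0 : ℝ),
      (∫⁻ ω, ENNReal.ofReal (ρ ^ (-γ) * ‖u (ρ • (ω : Euc n))‖) ^ k ∂(sphereMeasure n)) ^ (r / k) *
        ENNReal.ofReal (ρ ^ ((n : ℝ) - 1))) ^ (1 / r)

/-- The space-time norm `‖u‖_{L_t^q(I; L_ρ^r L_ω^k(|x|^{-rγ}))}`. -/
noncomputable def stNorm (n : ℕ) (q γ r k : ℝ) (I : Set ℝ) (u : ℝ → Euc n → ℂ) : ℝ≥0∞ :=
  (∫⁻ t in I, mixedNorm n γ r k (u t) ^ q) ^ (1 / q)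

/-- The `L²(ℝⁿ)` norm. -/
noncomputable def l2Norm (n : ℕ) (f : Euc n → ℂ) : ℝ≥0∞ :=
  (∫⁻ x : Euc n, ENNReal.ofReal ‖f x‖ ^ (2 : ℝ)) ^ (1 / 2 : ℝ)

lemma meas_rpow_const (c : ℝ) : Measurable fun x : ℝ => x ^ c := by measurability

lemma sphereMeasure_sfinite (n : ℕ) : SFinite (sphereMeasure n) := by
  unfold sphereMeasure; infer_instance

lemma polar_lintegral (n : ℕ) (hn : 0 < n) (h : Euc n → ℝ≥0∞) (hm : Measurable h) :
    ∫⁻ x, h x = ∫⁻ ρ in Set.Ioi (0:ℝ),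
      (∫⁻ ω, h (ρ • (ω : Euc n)) ∂sphereMeasure n) * ENNReal.ofReal (ρ ^ ((n:ℝ) - 1)) := by
  have dimE : Module.finrank ℝ (Euc n) = n := finrank_euclideanSpace_fin
  haveI : SFinite (sphereMeasure n) := sphereMeasure_sfinite n
  haveI : Nontrivial (Euc n) :=
    Module.nontrivial_of_finrank_pos (R := ℝ) (M := Euc n) (by rw [dimE]; exact hn)
  have hsm : Measurable fun p : Metric.sphere (0 : Euc n) 1 × Ioi (0:ℝ) =>
      h ((p.2 : ℝ) • (p.1 : Euc n)) := by
    apply hm.comp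
    exact ((continuous_subtype_val.comp continuous_snd).smul
      (continuous_subtype_val.comp continuous_fst)).measurable
  have key := (Measure.measurePreserving_homeomorphUnitSphereProd
      (volume : Measure (Euc n))).lintegral_comp hsm
  have lhs_eq : ∫⁻ x : ({0}ᶜ : Set (Euc n)), h ((((homeomorphUnitSphereProd (Euc n)) x).2 : ℝ) •
        (((homeomorphUnitSphereProd (Euc n)) x).1 : Euc n)) ∂(volume.comap Subtype.val)
      = ∫⁻ x : ({0}ᶜ : Set (Euc n)), h x ∂(volume.comap Subtype.val) := by
    refine lintegral_congr fun x => ?_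
    congr 1
    simp only [homeomorphUnitSphereProd_apply_fst_coe, homeomorphUnitSphereProd_apply_snd_coe]
    rw [smul_inv_smul₀ (norm_ne_zero_iff.2 x.2)]
  rw [lhs_eq] at key
  have F_meas : Measurable fun ρ : ℝ => ∫⁻ ω, h (ρ • (ω : Euc n)) ∂sphereMeasure n := by
    apply Measurable.lintegral_prod_right'
      (f := fun p : ℝ × Metric.sphere (0 : Euc n) 1 => h (p.1 • (p.2 : Euc n)))
    exact hm.comp (continuous_fst.smul (continuous_subtype_val.comp continuous_snd)).measurable
  calc ∫⁻ x, h x ∂volume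
      = ∫⁻ x in ({0}ᶜ : Set (Euc n)), h x ∂volume := by
        rw [MeasureTheory.restrict_compl_singleton]
    _ = ∫⁻ x : ({0}ᶜ : Set (Euc n)), h x ∂(volume.comap Subtype.val) :=
        (lintegral_subtype_comap (measurableSet_singleton 0).compl _).symm
    _ = ∫⁻ p : Metric.sphere (0 : Euc n) 1 × Ioi (0:ℝ), h ((p.2 : ℝ) • (p.1 : Euc n))
          ∂((volume : Measure (Euc n)).toSphere.prod
            (Measure.volumeIoiPow (Module.finrank ℝ (Euc n) - 1))) := key
    _ = ∫⁻ ρ : Ioi (0:ℝ), ∫⁻ ω, h ((ρ : ℝ) • (ω : Euc n)) ∂sphereMeasure n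
          ∂(Measure.volumeIoiPow (Module.finrank ℝ (Euc n) - 1)) :=
        lintegral_prod_symm _ hsm.aemeasurable
    _ = ∫⁻ ρ : Ioi (0:ℝ), ENNReal.ofReal ((ρ:ℝ) ^ (Module.finrank ℝ (Euc n) - 1)) *
          ∫⁻ ω, h ((ρ : ℝ) • (ω : Euc n)) ∂sphereMeasure n
          ∂(Measure.comap Subtype.val volume) := by
        rw [Measure.volumeIoiPow, lintegral_withDensity_eq_lintegral_mul]
        · rfl
        · exact (measurable_subtype_coe.pow_const _).ennreal_ofReal
        · exact F_meas.comp measurable_subtype_coe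
    _ = ∫⁻ ρ in Ioi (0:ℝ), ENNReal.ofReal (ρ ^ (Module.finrank ℝ (Euc n) - 1)) *
          ∫⁻ ω, h (ρ • (ω : Euc n)) ∂sphereMeasure n ∂volume :=
        lintegral_subtype_comap measurableSet_Ioi
          (fun ρ : ℝ => ENNReal.ofReal (ρ ^ (Module.finrank ℝ (Euc n) - 1)) *
            ∫⁻ ω, h (ρ • (ω : Euc n)) ∂sphereMeasure n)
    _ = _ := by
        rw [dimE]
        refine setLIntegral_congr_fun measurableSet_Ioi (fun ρ hρ => ?_)
        rw [mul_comm]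
        congr 2
        rw [← Real.rpow_natCast ρ (n-1)]
        congr 1
        have h1 : (1:ℕ) ≤ n := hn
        push_cast [Nat.cast_sub h1]
        ring

lemma conj_aux {β a b : ℝ} (hβ : 0 < β) (ha : 0 < 1/a) (hb : 0 < 1/b)
    (h : 1/b = β/2 + 1/a) : Real.HolderConjugate (2/(β*b)) (a/b) := by
  have hap : 0 < a := one_div_pos.mp ha
  have hbp : 0 < b := one_div_pos.mp hb
  have hb1 : b * (1/b) = 1 := by rw [mul_one_div, div_self (ne_of_gt hbp)]
  rw [Real.holderConjugate_iff]
  constructor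
  · rw [one_lt_div (by positivity)]
    have h2 : b * (1/b) = b*(β/2) + b*(1/a) := by rw [h]; ring
    nlinarith [mul_pos hbp ha]
  · rw [inv_div, inv_div, div_eq_mul_one_div b a,
      show β*b/2 + b*(1/a) = b*(1/b) from by rw [h]; ring, hb1]

lemma mixed_holder (n : ℕ) (hn : 0 < n) (α β r k r' k' : ℝ)
    (hβ : 0 < β) (hrpos : 0 < 1/r) (hkpos : 0 < 1/k)
    (hr' : 1/r' = β/2 + 1/r) (hk' : 1/k' = β/2 + 1/k)
    (f g : Euc n → ℂ) (hf : Measurable f) (hg : Measurable g) :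
    mixedNorm n (-(α/2)) r' k' (fun x => ((‖x‖ ^ (-α) * ‖f x‖ ^ β : ℝ) : ℂ) * g x) ≤
      l2Norm n f ^ β * mixedNorm n (α/2) r k g := by
  haveI : SFinite (sphereMeasure n) := sphereMeasure_sfinite n
  have hrp : 0 < r := one_div_pos.mp hrpos
  have hkp : 0 < k := one_div_pos.mp hkpos
  have hr'pos : 0 < 1/r' := by rw [hr']; linarith
  have hk'pos : 0 < 1/k' := by rw [hk']; linarith
  have hr'p : 0 < r' := one_div_pos.mp hr'pos
  have hk'p : 0 < k' := one_div_pos.mp hk'pos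
  have hrne : r ≠ 0 := ne_of_gt hrp
  have hkne : k ≠ 0 := ne_of_gt hkp
  have hr'ne : r' ≠ 0 := ne_of_gt hr'p
  have hk'ne : k' ≠ 0 := ne_of_gt hk'p
  have hβne : β ≠ 0 := ne_of_gt hβ
  have hpq1 : Real.HolderConjugate (2/(β*k')) (k/k') := conj_aux hβ hkpos hk'pos hk'
  have hpq2 : Real.HolderConjugate (2/(β*r')) (r/r') := conj_aux hβ hrpos hr'pos hr'
  have hsum : β*r'/2 + r'/r = 1 := by
    calc β*r'/2 + r'/r = r' * (β/2 + 1/r) := by rw [div_eq_mul_one_div r' r]; ring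
    _ = r' * (1/r') := by rw [hr']
    _ = 1 := by rw [mul_one_div, div_self hr'ne]
  simp only [mixedNorm, l2Norm]
  set σm := sphereMeasure n with hσm
  set W : ℝ → ℝ≥0∞ := fun ρ => ENNReal.ofReal (ρ ^ ((n:ℝ) - 1)) with hWdef
  set Fq : ℝ → ℝ≥0∞ :=
    fun ρ => ∫⁻ ω, (ENNReal.ofReal ‖f (ρ • (ω : Euc n))‖) ^ (2:ℝ) ∂σm with hFqdef
  set Gq : ℝ → ℝ≥0∞ :=
    fun ρ => ∫⁻ ω, ENNReal.ofReal (ρ ^ (-(α/2)) * ‖g (ρ • (ω : Euc n))‖) ^ k ∂σm with hGqdef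
  have smul_meas : Measurable fun p : ℝ × Metric.sphere (0 : Euc n) 1 => p.1 • (p.2 : Euc n) :=
    (continuous_fst.smul (continuous_subtype_val.comp continuous_snd)).measurable
  have smul_meas' : ∀ ρ : ℝ, Measurable fun ω : Metric.sphere (0 : Euc n) 1 => ρ • (ω : Euc n) :=
    fun ρ => (continuous_subtype_val.const_smul ρ).measurable
  have hFm : Measurable Fq := by
    rw [hFqdef]
    apply Measurable.lintegral_prod_right'
      (f := fun p : ℝ × Metric.sphere (0 : Euc n) 1 =>
        (ENNReal.ofReal ‖f (p.1 • (p.2 : Euc n))‖) ^ (2:ℝ))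
    exact ENNReal.continuous_rpow_const.measurable.comp
      ((hf.comp smul_meas).norm.ennreal_ofReal)
  have hGm : Measurable Gq := by
    rw [hGqdef]
    apply Measurable.lintegral_prod_right'
      (f := fun p : ℝ × Metric.sphere (0 : Euc n) 1 =>
        ENNReal.ofReal (p.1 ^ (-(α/2)) * ‖g (p.1 • (p.2 : Euc n))‖) ^ k)
    apply ENNReal.continuous_rpow_const.measurable.comp
    apply Measurable.ennreal_ofReal
    have h1 : Measurable fun x : ℝ => x ^ (-(α/2)) := meas_rpow_const _
    exact (h1.comp measurable_fst).mul (hg.comp smul_meas).norm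
  have hWm : Measurable W := by
    rw [hWdef]
    exact (meas_rpow_const _).ennreal_ofReal
  have key1 : ∀ ρ ∈ Ioi (0:ℝ),
      (∫⁻ ω, ENNReal.ofReal (ρ ^ (-(-(α/2))) *
          ‖((‖ρ • (ω : Euc n)‖ ^ (-α) * ‖f (ρ • (ω : Euc n))‖ ^ β : ℝ) : ℂ) *
            g (ρ • (ω : Euc n))‖) ^ k' ∂σm) ^ (r'/k') * W ρ
      ≤ ((Fq ρ * W ρ) ^ (β*r'/2)) * ((Gq ρ ^ (r/k) * W ρ) ^ (r'/r)) := by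
    intro ρ hρ
    have hρ0 : (0:ℝ) < ρ := hρ
    have hWne : W ρ ≠ 0 := by
      rw [hWdef]
      exact (ENNReal.ofReal_pos.mpr (Real.rpow_pos_of_pos hρ0 _)).ne'
    have hWtop : W ρ ≠ ⊤ := by rw [hWdef]; exact ENNReal.ofReal_ne_top
    have point : ∀ ω : Metric.sphere (0 : Euc n) 1,
        ENNReal.ofReal (ρ ^ (-(-(α/2))) *
          ‖((‖ρ • (ω : Euc n)‖ ^ (-α) * ‖f (ρ • (ω : Euc n))‖ ^ β : ℝ) : ℂ) *
            g (ρ • (ω : Euc n))‖) ^ k'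
        = ((ENNReal.ofReal ‖f (ρ • (ω : Euc n))‖) ^ (β*k')) *
          ((ENNReal.ofReal (ρ ^ (-(α/2)) * ‖g (ρ • (ω : Euc n))‖)) ^ k') := by
      intro ω
      have hx : ‖ρ • (ω : Euc n)‖ = ρ := by
        rw [norm_smul, norm_eq_of_mem_sphere ω, mul_one, Real.norm_eq_abs, abs_of_pos hρ0]
      rw [neg_neg, norm_mul, Complex.norm_real, Real.norm_eq_abs,
        abs_of_nonneg (by positivity), hx]
      have harith : ρ ^ (α/2) * (ρ ^ (-α) * ‖f (ρ • (ω : Euc n))‖ ^ β * ‖g (ρ • (ω : Euc n))‖)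
          = ‖f (ρ • (ω : Euc n))‖ ^ β * (ρ ^ (-(α/2)) * ‖g (ρ • (ω : Euc n))‖) := by
        rw [show -(α/2) = α/2 + -α by ring, Real.rpow_add hρ0]; ring
      rw [harith, ENNReal.ofReal_mul (by positivity),
        ← ENNReal.ofReal_rpow_of_nonneg (norm_nonneg _) hβ.le,
        ENNReal.mul_rpow_of_nonneg _ _ hk'p.le, ← ENNReal.rpow_mul]
    rw [lintegral_congr point]
    have mF1 : Measurable fun ω : Metric.sphere (0 : Euc n) 1 =>
        (ENNReal.ofReal ‖f (ρ • (ω : Euc n))‖) ^ (β*k') :=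
      ENNReal.continuous_rpow_const.measurable.comp
        ((hf.comp (smul_meas' ρ)).norm.ennreal_ofReal)
    have mG1 : Measurable fun ω : Metric.sphere (0 : Euc n) 1 =>
        (ENNReal.ofReal (ρ ^ (-(α/2)) * ‖g (ρ • (ω : Euc n))‖)) ^ k' :=
      ENNReal.continuous_rpow_const.measurable.comp
        ((measurable_const.mul (hg.comp (smul_meas' ρ)).norm).ennreal_ofReal)
    have holder := ENNReal.lintegral_mul_le_Lp_mul_Lq σm hpq1
      mF1.aemeasurable mG1.aemeasurable
    simp only [Pi.mul_apply] at holder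
    have i1 : (∫⁻ ω, ((ENNReal.ofReal ‖f (ρ • (ω : Euc n))‖) ^ (β*k')) ^ (2/(β*k')) ∂σm)
        = Fq ρ := by
      rw [hFqdef]
      refine lintegral_congr fun ω => ?_
      rw [← ENNReal.rpow_mul]
      congr 1
      field_simp
    have i2 : (∫⁻ ω, ((ENNReal.ofReal (ρ ^ (-(α/2)) * ‖g (ρ • (ω : Euc n))‖)) ^ k') ^ (k/k') ∂σm)
        = Gq ρ := by
      rw [hGqdef]
      refine lintegral_congr fun ω => ?_
      rw [← ENNReal.rpow_mul]
      congr 1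
      field_simp
    rw [i1, i2] at holder
    have x1 : (1/(2/(β*k'))) * (r'/k') = β*r'/2 := by
      rw [one_div_div]; field_simp
    have x2 : (1/(k/k')) * (r'/k') = r'/k := by
      rw [one_div_div]; field_simp
    have x3 : (r/k) * (r'/r) = r'/k := by field_simp
    have Wsum : W ρ ^ (β*r'/2) * W ρ ^ (r'/r) = W ρ := by
      rw [← ENNReal.rpow_add _ _ hWne hWtop, hsum, ENNReal.rpow_one]
    calc (∫⁻ ω, ((ENNReal.ofReal ‖f (ρ • (ω : Euc n))‖) ^ (β*k')) *
            ((ENNReal.ofReal (ρ ^ (-(α/2)) * ‖g (ρ • (ω : Euc n))‖)) ^ k') ∂σm) ^ (r'/k') * W ρ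
        ≤ ((Fq ρ) ^ (1/(2/(β*k'))) * (Gq ρ) ^ (1/(k/k'))) ^ (r'/k') * W ρ :=
          mul_le_mul_left (ENNReal.rpow_le_rpow holder (by positivity)) _
      _ = (Fq ρ) ^ (β*r'/2) * (Gq ρ) ^ (r'/k) * W ρ := by
          rw [ENNReal.mul_rpow_of_nonneg _ _ (by positivity), ← ENNReal.rpow_mul,
            ← ENNReal.rpow_mul, x1, x2]
      _ = (Fq ρ) ^ (β*r'/2) * (Gq ρ) ^ (r'/k) * (W ρ ^ (β*r'/2) * W ρ ^ (r'/r)) := by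
          rw [Wsum]
      _ = ((Fq ρ * W ρ) ^ (β*r'/2)) * ((Gq ρ ^ (r/k) * W ρ) ^ (r'/r)) := by
          rw [ENNReal.mul_rpow_of_nonneg (Fq ρ) (W ρ) (by positivity),
            ENNReal.mul_rpow_of_nonneg (Gq ρ ^ (r/k)) (W ρ) (by positivity),
            ← ENNReal.rpow_mul (Gq ρ), x3]
          ring
  have step := lintegral_mono_ae (μ := volume.restrict (Ioi (0:ℝ)))
    ((ae_restrict_mem measurableSet_Ioi).mono key1)
  have mΦ : Measurable fun ρ => (Fq ρ * W ρ) ^ (β*r'/2) :=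
    ENNReal.continuous_rpow_const.measurable.comp (hFm.mul hWm)
  have mΨ : Measurable fun ρ => (Gq ρ ^ (r/k) * W ρ) ^ (r'/r) :=
    ENNReal.continuous_rpow_const.measurable.comp
      ((ENNReal.continuous_rpow_const.measurable.comp hGm).mul hWm)
  have holder2 := ENNReal.lintegral_mul_le_Lp_mul_Lq (volume.restrict (Ioi (0:ℝ))) hpq2
    mΦ.aemeasurable mΨ.aemeasurable
  simp only [Pi.mul_apply] at holder2
  have j1 : (∫⁻ ρ in Ioi (0:ℝ), ((Fq ρ * W ρ) ^ (β*r'/2)) ^ (2/(β*r')))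
      = ∫⁻ ρ in Ioi (0:ℝ), Fq ρ * W ρ := by
    refine lintegral_congr fun ρ => ?_
    rw [← ENNReal.rpow_mul, show (β*r'/2) * (2/(β*r')) = 1 by field_simp, ENNReal.rpow_one]
  have j2 : (∫⁻ ρ in Ioi (0:ℝ), ((Gq ρ ^ (r/k) * W ρ) ^ (r'/r)) ^ (r/r'))
      = ∫⁻ ρ in Ioi (0:ℝ), Gq ρ ^ (r/k) * W ρ := by
    refine lintegral_congr fun ρ => ?_
    rw [← ENNReal.rpow_mul, show (r'/r) * (r/r') = 1 by field_simp, ENNReal.rpow_one]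
  rw [j1, j2] at holder2
  have z1 : (1/(2/(β*r'))) * (1/r') = β/2 := by rw [one_div_div]; field_simp
  have z2 : (1/(r/r')) * (1/r') = 1/r := by rw [one_div_div]; field_simp
  have hmf2 : Measurable fun x : Euc n => ENNReal.ofReal ‖f x‖ ^ (2:ℝ) :=
    ENNReal.continuous_rpow_const.measurable.comp (hf.norm.ennreal_ofReal)
  have polarf : (∫⁻ ρ in Ioi (0:ℝ), Fq ρ * W ρ)
      = ∫⁻ x : Euc n, ENNReal.ofReal ‖f x‖ ^ (2:ℝ) := by
    rw [hFqdef, hWdef, hσm]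
    exact (polar_lintegral n hn (fun x => ENNReal.ofReal ‖f x‖ ^ (2:ℝ)) hmf2).symm
  have final2 : (∫⁻ ρ in Ioi (0:ℝ),
          (∫⁻ ω, ENNReal.ofReal (ρ ^ (-(-(α/2))) *
            ‖((‖ρ • (ω : Euc n)‖ ^ (-α) * ‖f (ρ • (ω : Euc n))‖ ^ β : ℝ) : ℂ) *
              g (ρ • (ω : Euc n))‖) ^ k' ∂σm) ^ (r'/k') * W ρ) ^ (1/r')
      ≤ ((∫⁻ x : Euc n, ENNReal.ofReal ‖f x‖ ^ (2:ℝ)) ^ (1/2:ℝ)) ^ β *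
          (∫⁻ ρ in Ioi (0:ℝ), Gq ρ ^ (r/k) * W ρ) ^ (1/r) := by
    calc (∫⁻ ρ in Ioi (0:ℝ),
            (∫⁻ ω, ENNReal.ofReal (ρ ^ (-(-(α/2))) *
              ‖((‖ρ • (ω : Euc n)‖ ^ (-α) * ‖f (ρ • (ω : Euc n))‖ ^ β : ℝ) : ℂ) *
                g (ρ • (ω : Euc n))‖) ^ k' ∂σm) ^ (r'/k') * W ρ) ^ (1/r')
        ≤ ((∫⁻ ρ in Ioi (0:ℝ), Fq ρ * W ρ) ^ (1/(2/(β*r'))) *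
            (∫⁻ ρ in Ioi (0:ℝ), Gq ρ ^ (r/k) * W ρ) ^ (1/(r/r'))) ^ (1/r') :=
          ENNReal.rpow_le_rpow (step.trans holder2) (le_of_lt hr'pos)
      _ = (∫⁻ ρ in Ioi (0:ℝ), Fq ρ * W ρ) ^ (β/2) *
            (∫⁻ ρ in Ioi (0:ℝ), Gq ρ ^ (r/k) * W ρ) ^ (1/r) := by
          rw [ENNReal.mul_rpow_of_nonneg _ _ (le_of_lt hr'pos), ← ENNReal.rpow_mul,
            ← ENNReal.rpow_mul, z1, z2]
      _ = ((∫⁻ x : Euc n, ENNReal.ofReal ‖f x‖ ^ (2:ℝ)) ^ (1/2:ℝ)) ^ β *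
            (∫⁻ ρ in Ioi (0:ℝ), Gq ρ ^ (r/k) * W ρ) ^ (1/r) := by
          rw [polarf, ← ENNReal.rpow_mul]
          congr 2
          ring
  simpa only [hWdef, hFqdef, hGqdef, hσm] using final2

/-- Lemma 4.1, nonlinear Hölder estimate: with `γ = α/2`,
`β = (4-2α)/n`, `1/r = (n-2)/(2n) + α/(2n)`, `1/r - α/(4(n-1)) < 1/k < 1/r`, and `k̃`
defined by `1/k̃' = β/2 + 1/k`, one has `1/r' = β/2 + 1/r`, `1/r < 1/k̃`, and
`‖ |x|^{-α} |u|^β v ‖_{L_t^2([0,∞); L_ρ^{r'} L_ω^{k̃'}(|x|^{r'γ}))}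
  ≤ ‖u‖_{L_t^∞([0,∞); L²)}^β ‖v‖_{L_t^2([0,∞); L_ρ^r L_ω^k(|x|^{-rγ}))}`. -/
theorem nonlinear_holder_estimate
    (n : ℕ) (hn : 3 ≤ n) (α β r k kt : ℝ)
    (hα0 : 0 < α) (hα2 : α < 2) (hβ : β = (4 - 2 * α) / n)
    (hr : 1 / r = ((n : ℝ) - 2) / (2 * n) + α / (2 * n))
    (hk1 : 1 / r - α / (4 * ((n : ℝ) - 1)) < 1 / k) (hk2 : 1 / k < 1 / r)
    (hkt : 1 / (kt / (kt - 1)) = β / 2 + 1 / k) :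
    1 / (r / (r - 1)) = β / 2 + 1 / r ∧ 1 / r < 1 / kt ∧
    ∀ u v : ℝ → Euc n → ℂ,
      Measurable (Function.uncurry u) → Measurable (Function.uncurry v) →
      stNorm n 2 (-(α / 2)) (r / (r - 1)) (kt / (kt - 1)) (Set.Ici 0)
          (fun t x => ((‖x‖ ^ (-α) * ‖u t x‖ ^ β : ℝ) : ℂ) * v t x) ≤
        (essSup (fun t => l2Norm n (u t)) (volume.restrict (Set.Ici 0))) ^ β *
          stNorm n 2 (α / 2) r k (Set.Ici 0) v := by
  have hn3 : (3:ℝ) ≤ (n:ℝ) := by exact_mod_cast hn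
  have hnp : (0:ℝ) < n := by linarith
  have hnne : (n:ℝ) ≠ 0 := ne_of_gt hnp
  have hβpos : 0 < β := by rw [hβ]; apply div_pos <;> linarith
  have hrpos : 0 < 1/r := by
    rw [hr]
    have h1 : 0 ≤ ((n:ℝ)-2)/(2*n) := by apply div_nonneg <;> linarith
    have h2 : 0 < α/(2*n) := div_pos hα0 (by linarith)
    linarith
  have hrp : 0 < r := one_div_pos.mp hrpos
  have hrne : r ≠ 0 := ne_of_gt hrp
  have h2r : (2:ℝ)/r = 2*(1/r) := by ring
  have hkey : β/2 + 2/r = 1 := by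
    rw [hβ, h2r, hr]; field_simp; ring
  have part1 : 1 / (r / (r - 1)) = β / 2 + 1 / r := by
    rw [one_div_div, sub_div, div_self hrne]
    linarith
  have hkpos : 0 < 1/k := by
    have hsub : 0 < 1/r - α/(4*((n:ℝ)-1)) := by
      rw [hr, ← add_div, sub_pos, div_lt_div_iff₀ (by linarith) (by linarith)]
      nlinarith
    linarith
  have hkt2 : (kt-1)/kt = β/2 + 1/k := (one_div_div kt (kt-1)).symm.trans hkt
  have hktne : kt ≠ 0 := by
    intro h0; rw [h0, div_zero] at hkt2; linarith
  have hkt3 : 1 - 1/kt = β/2 + 1/k := by rw [← hkt2, sub_div, div_self hktne]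
  have part2 : 1/r < 1/kt := by linarith
  refine ⟨part1, part2, ?_⟩
  intro u v hu hv
  have hn0 : 0 < n := by omega
  haveI : SFinite (sphereMeasure n) := sphereMeasure_sfinite n
  have hMle : ∀ t : ℝ, mixedNorm n (-(α/2)) (r/(r-1)) (kt/(kt-1))
      (fun x => ((‖x‖ ^ (-α) * ‖u t x‖ ^ β : ℝ) : ℂ) * v t x)
      ≤ l2Norm n (u t) ^ β * mixedNorm n (α/2) r k (v t) := fun t =>
    mixed_holder n hn0 α β r k (r/(r-1)) (kt/(kt-1)) hβpos hrpos hkpos part1 hkt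
      (u t) (v t) (hu.comp measurable_prodMk_left) (hv.comp measurable_prodMk_left)
  have hNm : Measurable fun t : ℝ => mixedNorm n (α/2) r k (v t) := by
    simp only [mixedNorm]
    have H1 : Measurable fun p : ℝ × ℝ =>
        ∫⁻ ω, ENNReal.ofReal (p.2 ^ (-(α/2)) * ‖v p.1 (p.2 • (ω : Euc n))‖) ^ k
          ∂sphereMeasure n := by
      apply Measurable.lintegral_prod_right'
        (f := fun q : (ℝ × ℝ) × Metric.sphere (0 : Euc n) 1 =>
          ENNReal.ofReal (q.1.2 ^ (-(α/2)) * ‖v q.1.1 (q.1.2 • (q.2 : Euc n))‖) ^ k)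
      apply ENNReal.continuous_rpow_const.measurable.comp
      apply Measurable.ennreal_ofReal
      apply Measurable.mul
      · exact (meas_rpow_const _).comp (measurable_snd.comp measurable_fst)
      · apply Measurable.norm
        have hsm2 : Measurable fun q : (ℝ × ℝ) × Metric.sphere (0 : Euc n) 1 =>
            (q.1.1, q.1.2 • (q.2 : Euc n)) :=
          (measurable_fst.comp measurable_fst).prodMk
            (((continuous_snd.comp continuous_fst).smul
              (continuous_subtype_val.comp continuous_snd)).measurable)
        exact hv.comp hsm2
    have H2 : Measurable fun p : ℝ × ℝ =>
        (∫⁻ ω, ENNReal.ofReal (p.2 ^ (-(α/2)) * ‖v p.1 (p.2 • (ω : Euc n))‖) ^ k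
          ∂sphereMeasure n) ^ (r/k) * ENNReal.ofReal (p.2 ^ ((n:ℝ)-1)) :=
      (ENNReal.continuous_rpow_const.measurable.comp H1).mul
        (((meas_rpow_const _).comp measurable_snd).ennreal_ofReal)
    have H3 : Measurable fun t : ℝ =>
        ∫⁻ ρ in Ioi (0:ℝ), (∫⁻ ω, ENNReal.ofReal (ρ ^ (-(α/2)) * ‖v t (ρ • (ω : Euc n))‖) ^ k
          ∂sphereMeasure n) ^ (r/k) * ENNReal.ofReal (ρ ^ ((n:ℝ)-1)) :=
      Measurable.lintegral_prod_right' (ν := volume.restrict (Ioi (0:ℝ))) H2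
    exact ENNReal.continuous_rpow_const.measurable.comp H3
  set E := essSup (fun t => l2Norm n (u t)) (volume.restrict (Set.Ici (0:ℝ))) with hE
  simp only [stNorm]
  have hEbd : ∀ᵐ t ∂(volume.restrict (Set.Ici (0:ℝ))), l2Norm n (u t) ≤ E :=
    ENNReal.ae_le_essSup _
  have hmono : ∀ᵐ t ∂(volume.restrict (Set.Ici (0:ℝ))),
      mixedNorm n (-(α/2)) (r/(r-1)) (kt/(kt-1))
        (fun x => ((‖x‖ ^ (-α) * ‖u t x‖ ^ β : ℝ) : ℂ) * v t x) ^ (2:ℝ)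
      ≤ E ^ (β*2) * mixedNorm n (α/2) r k (v t) ^ (2:ℝ) := by
    filter_upwards [hEbd] with t ht
    calc mixedNorm n (-(α/2)) (r/(r-1)) (kt/(kt-1))
          (fun x => ((‖x‖ ^ (-α) * ‖u t x‖ ^ β : ℝ) : ℂ) * v t x) ^ (2:ℝ)
        ≤ (l2Norm n (u t) ^ β * mixedNorm n (α/2) r k (v t)) ^ (2:ℝ) :=
          ENNReal.rpow_le_rpow (hMle t) (by norm_num)
      _ ≤ (E ^ β * mixedNorm n (α/2) r k (v t)) ^ (2:ℝ) :=
          ENNReal.rpow_le_rpow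
            (mul_le_mul_left (ENNReal.rpow_le_rpow ht hβpos.le) _) (by norm_num)
      _ = E ^ (β*2) * mixedNorm n (α/2) r k (v t) ^ (2:ℝ) := by
          rw [ENNReal.mul_rpow_of_nonneg _ _ (by norm_num : (0:ℝ) ≤ 2), ← ENNReal.rpow_mul]
  calc (∫⁻ t in Set.Ici (0:ℝ), mixedNorm n (-(α/2)) (r/(r-1)) (kt/(kt-1))
          (fun x => ((‖x‖ ^ (-α) * ‖u t x‖ ^ β : ℝ) : ℂ) * v t x) ^ (2:ℝ)) ^ (1/(2:ℝ))
      ≤ (∫⁻ t in Set.Ici (0:ℝ),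
          E ^ (β*2) * mixedNorm n (α/2) r k (v t) ^ (2:ℝ)) ^ (1/(2:ℝ)) :=
        ENNReal.rpow_le_rpow (lintegral_mono_ae hmono) (by norm_num)
    _ = (E ^ (β*2) * ∫⁻ t in Set.Ici (0:ℝ),
          mixedNorm n (α/2) r k (v t) ^ (2:ℝ)) ^ (1/(2:ℝ)) := by
        have hN2 : Measurable fun t : ℝ => mixedNorm n (α/2) r k (v t) ^ (2:ℝ) :=
          ENNReal.continuous_rpow_const.measurable.comp hNm
        rw [lintegral_const_mul'' _ hN2.aemeasurable]
    _ = E ^ β * (∫⁻ t in Set.Ici (0:ℝ),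
          mixedNorm n (α/2) r k (v t) ^ (2:ℝ)) ^ (1/(2:ℝ)) := by
        rw [ENNReal.mul_rpow_of_nonneg _ _ (by norm_num : (0:ℝ) ≤ 1/2), ← ENNReal.rpow_mul]
        congr 2
        ring
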